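/- Let μ be a probability measure on ℕ^E (E finite) with all moments finite, which is completely independent (product measure). Let A_1,...,A_N be the distinct coordinates and d_1,...,d_N ∈ ℕ with Σd_i = n. Then the orthogonal projection of the monomial η ↦ ∏_i η_{A_i}^{d_i} onto the orthogonal complement of polynomials of degree ≤ n-1 in L²(μ) factorizes as the product over i of the orthogonal projections of η ↦ η_{A_i}^{d_i} onto the complements of polynomials of degree ≤ d_i - 1 in the single variable η_{A_i}. -/

import Mathlib

open MeasureTheory

theorem pi_integral_prod_aux {N : ℕ} (μ : Fin N → Measure ℕ)
    [∀ i, IsProbabilityMeasure (μ i)] (f : Fin N → ℕ → ℝ) :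
    ∫ η : Fin N → ℕ, ∏ i, f i (η i) ∂(Measure.pi μ) = ∏ i, ∫ x, f i x ∂(μ i) :=
  @MeasureTheory.integral_fin_nat_prod_eq_prod ℝ _ N (fun _ => ℕ) (fun _ => inferInstance) μ
    (fun i => inferInstanceAs (SigmaFinite (μ i))) f

/-- let `μ = ⊗_i μ_i` be a completely independent (product) probability measure
on `ℕ^E` with `E = {A_1,…,A_N}` finite and all moments finite, and let `d_i` be given with
`∑ d_i = n`. For each coordinate let `Q i` be the single-variable orthogonal projection of
`η_{A_i} ↦ η_{A_i}^{d_i}` onto the complement of polynomials of degree `≤ d_i - 1` in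
`L²(μ_i)`, i.e. the monic polynomial of degree `d_i` orthogonal to all lower degrees. Then the
orthogonal projection in `L²(μ)` of the monomial `η ↦ ∏_i η_{A_i}^{d_i}` onto the complement
of polynomials of degree `≤ n-1` factorizes as the product `η ↦ ∏_i Q_i(η_{A_i})`:
equivalently, this product is orthogonal to all monomials of total degree `< n` and differs
from the monomial by a linear combination of monomials of total degree `< n`. -/
theorem stmt17 (N n : ℕ) (μ : Fin N → Measure ℕ) [∀ i, IsProbabilityMeasure (μ i)]
    (hmom : ∀ i k, Integrable (fun ℓ : ℕ => (ℓ : ℝ) ^ k) (μ i))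
    (d : Fin N → ℕ) (hd : ∑ i, d i = n)
    (Q : Fin N → Polynomial ℝ)
    (hmonic : ∀ i, (Q i).Monic) (hdeg : ∀ i, (Q i).natDegree = d i)
    (horth : ∀ i j, j < d i → ∫ ℓ : ℕ, (Q i).eval (ℓ : ℝ) * (ℓ : ℝ) ^ j ∂(μ i) = 0) :
    (∀ e : Fin N → ℕ, (∑ i, e i) < n →
        ∫ η : Fin N → ℕ, (∏ i, (Q i).eval ((η i : ℝ))) * ∏ i, (η i : ℝ) ^ (e i)
          ∂(Measure.pi μ) = 0)
      ∧ (fun η : Fin N → ℕ =>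
            (∏ i, (η i : ℝ) ^ (d i)) - ∏ i, (Q i).eval ((η i : ℝ)))
          ∈ Submodule.span ℝ
              {F : (Fin N → ℕ) → ℝ | ∃ e : Fin N → ℕ,
                (∑ i, e i) < n ∧ F = fun η => ∏ i, (η i : ℝ) ^ (e i)} := by
  constructor
  · intro e he
    have hfun : ∀ η : Fin N → ℕ,
        (∏ i, (Q i).eval ((η i : ℝ))) * ∏ i, (η i : ℝ) ^ (e i)
          = ∏ i, ((Q i).eval ((η i : ℝ)) * (η i : ℝ) ^ (e i)) := by
      intro η; rw [Finset.prod_mul_distrib]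
    rw [show (fun η : Fin N → ℕ =>
        (∏ i, (Q i).eval ((η i : ℝ))) * ∏ i, (η i : ℝ) ^ (e i))
        = fun η => ∏ i, ((Q i).eval ((η i : ℝ)) * (η i : ℝ) ^ (e i)) from funext hfun]
    rw [pi_integral_prod_aux μ (fun i ℓ => (Q i).eval (ℓ : ℝ) * (ℓ : ℝ) ^ (e i))]
    obtain ⟨i0, hi0⟩ : ∃ i, e i < d i := by
      by_contra h
      push_neg at h
      have h2 : ∑ i, d i ≤ ∑ i, e i := Finset.sum_le_sum (fun i _ => h i)
      omega
    exact Finset.prod_eq_zero (Finset.mem_univ i0) (horth i0 (e i0) hi0)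
  · set T := Fintype.piFinset (fun i => Finset.range (d i + 1)) with hT
    have expand : ∀ η : Fin N → ℕ, ∏ i, (Q i).eval ((η i : ℝ))
        = ∑ e ∈ T, (∏ i, (Q i).coeff (e i)) * ∏ i, (η i : ℝ) ^ (e i) := by
      intro η
      have h1 : ∀ i, (Q i).eval ((η i : ℝ))
          = ∑ k ∈ Finset.range (d i + 1), (Q i).coeff k * (η i : ℝ) ^ k := by
        intro i
        conv_lhs => rw [Polynomial.eval_eq_sum_range]
        rw [hdeg i]
      rw [Finset.prod_congr rfl (fun i _ => h1 i), Finset.prod_univ_sum]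
      exact Finset.sum_congr rfl (fun e _ => Finset.prod_mul_distrib)
    have hdT : d ∈ T := by
      simp [hT, Fintype.mem_piFinset]
    have hcd : ∏ i, (Q i).coeff (d i) = 1 :=
      Finset.prod_eq_one (fun i _ => by rw [← hdeg i]; exact (hmonic i).coeff_natDegree)
    have key : (fun η : Fin N → ℕ =>
          (∏ i, (η i : ℝ) ^ (d i)) - ∏ i, (Q i).eval ((η i : ℝ)))
        = ∑ e ∈ T.erase d, (-(∏ i, (Q i).coeff (e i))) •
            (fun η : Fin N → ℕ => ∏ i, (η i : ℝ) ^ (e i)) := by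
      funext η
      rw [Finset.sum_apply]
      simp only [Pi.smul_apply, smul_eq_mul]
      rw [expand η, ← Finset.add_sum_erase _ _ hdT, hcd, one_mul]
      simp only [neg_mul, Finset.sum_neg_distrib]
      ring
    rw [key]
    refine Submodule.sum_mem _ (fun e heT => ?_)
    refine Submodule.smul_mem _ _ (Submodule.subset_span ?_)
    refine ⟨e, ?_, rfl⟩
    rw [← hd]
    have hne : e ≠ d := (Finset.mem_erase.mp heT).1
    have hle : ∀ i, e i ≤ d i := by
      intro i
      have := (Fintype.mem_piFinset.mp (Finset.mem_of_mem_erase heT)) i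
      simpa using Nat.lt_succ_iff.mp (Finset.mem_range.mp this)
    obtain ⟨i0, hi0⟩ : ∃ i, e i < d i := by
      by_contra h
      push_neg at h
      exact hne (funext fun i => le_antisymm (hle i) (h i))
    exact Finset.sum_lt_sum (fun i _ => hle i) ⟨i0, Finset.mem_univ _, hi0⟩
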